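/- (Kitaev's Lemma.) Let A₁ and A₂ be positive semi-definite Hermitian operators on a finite-dimensional complex Hilbert space, let G₁ = ker A₁ and G₂ = ker A₂, and let Π₁, Π₂ be the orthogonal projections onto G₁ and G₂. Assume G₁ ∩ G₂ = {0} and that A_i ≥ δ(1 − Π_i) for some δ > 0 and i = 1,2. Then A₁ + A₂ ≥ δ(1 − ε)·1, where ε = sup{|⟨ψ₁, ψ₂⟩| : ψ₁ ∈ G₁, ψ₂ ∈ G₂, ‖ψ₁‖ = ‖ψ₂‖ = 1} (with ε = 0 if G₁ or G₂ is {0}). -/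

import Mathlib

open scoped ComplexInnerProductSpace

noncomputable section

/-- Kitaev's Lemma: if `A₁, A₂` are positive semi-definite Hermitian
operators on a finite-dimensional complex Hilbert space with kernels `G₁, G₂`
satisfying `G₁ ∩ G₂ = {0}` and `A_i ≥ δ(1 − Π_i)` (`Π_i` the orthogonal projection
onto `G_i`), then `A₁ + A₂ ≥ δ(1 − ε)·1`, where
`ε = sup{|⟨ψ₁, ψ₂⟩| : ψ_i ∈ G_i, ‖ψ_i‖ = 1}`. -/
theorem kitaev_lemma
    {E : Type*} [NormedAddCommGroup E] [InnerProductSpace ℂ E] [FiniteDimensional ℂ E]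
    (A₁ A₂ : E →ₗ[ℂ] E)
    (hsym₁ : A₁.IsSymmetric) (hsym₂ : A₂.IsSymmetric)
    (hpos₁ : ∀ ψ : E, 0 ≤ (⟪ψ, A₁ ψ⟫).re) (hpos₂ : ∀ ψ : E, 0 ≤ (⟪ψ, A₂ ψ⟫).re)
    (hdisj : LinearMap.ker A₁ ⊓ LinearMap.ker A₂ = ⊥)
    (δ : ℝ) (hδ : 0 < δ)
    (hgap₁ : ∀ ψ : E,
      δ * ‖ψ - (Submodule.orthogonalProjection (LinearMap.ker A₁) ψ : E)‖ ^ 2 ≤ (⟪ψ, A₁ ψ⟫).re)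
    (hgap₂ : ∀ ψ : E,
      δ * ‖ψ - (Submodule.orthogonalProjection (LinearMap.ker A₂) ψ : E)‖ ^ 2 ≤ (⟪ψ, A₂ ψ⟫).re)
    (ε : ℝ)
    (hε : ε = sSup {r : ℝ | ∃ ψ₁ ∈ LinearMap.ker A₁, ∃ ψ₂ ∈ LinearMap.ker A₂,
        ‖ψ₁‖ = 1 ∧ ‖ψ₂‖ = 1 ∧ r = ‖⟪ψ₁, ψ₂⟫‖}) :
    ∀ ψ : E, δ * (1 - ε) * ‖ψ‖ ^ 2 ≤ (⟪ψ, (A₁ + A₂) ψ⟫).re := by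

  intro ψ
  have hbdd : BddAbove {r : ℝ | ∃ ψ₁ ∈ LinearMap.ker A₁, ∃ ψ₂ ∈ LinearMap.ker A₂,
      ‖ψ₁‖ = 1 ∧ ‖ψ₂‖ = 1 ∧ r = ‖⟪ψ₁, ψ₂⟫‖} := by
    refine ⟨1, ?_⟩
    rintro r ⟨ψ₁, h₁, ψ₂, h₂, hn₁, hn₂, rfl⟩
    calc ‖⟪ψ₁, ψ₂⟫‖ ≤ ‖ψ₁‖ * ‖ψ₂‖ := norm_inner_le_norm _ _
      _ = 1 := by rw [hn₁, hn₂]; ring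
  have hε0 : 0 ≤ ε := by
    rcases Set.eq_empty_or_nonempty {r : ℝ | ∃ ψ₁ ∈ LinearMap.ker A₁, ∃ ψ₂ ∈ LinearMap.ker A₂,
        ‖ψ₁‖ = 1 ∧ ‖ψ₂‖ = 1 ∧ r = ‖⟪ψ₁, ψ₂⟫‖} with h | h
    · rw [hε, h, Real.sSup_empty]
    · obtain ⟨r, hr⟩ := h
      have hr0 : 0 ≤ r := by
        obtain ⟨ψ₁, h₁, ψ₂, h₂, hn₁, hn₂, rfl⟩ := hr
        exact norm_nonneg _
      rw [hε]
      exact le_trans hr0 (le_csSup hbdd hr)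
  have key : ∀ u ∈ LinearMap.ker A₁, ∀ v ∈ LinearMap.ker A₂,
      ‖⟪u, v⟫‖ ≤ ε * (‖u‖ * ‖v‖) := by
    intro u hu v hv
    rcases eq_or_ne u 0 with rfl | hu0
    · simp
    rcases eq_or_ne v 0 with rfl | hv0
    · simp
    have hnu : (0:ℝ) < ‖u‖ := norm_pos_iff.2 hu0
    have hnv : (0:ℝ) < ‖v‖ := norm_pos_iff.2 hv0
    have hmem : ‖u‖⁻¹ * ‖v‖⁻¹ * ‖⟪u, v⟫‖ ∈ {r : ℝ | ∃ ψ₁ ∈ LinearMap.ker A₁,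
        ∃ ψ₂ ∈ LinearMap.ker A₂, ‖ψ₁‖ = 1 ∧ ‖ψ₂‖ = 1 ∧ r = ‖⟪ψ₁, ψ₂⟫‖} := by
      refine ⟨((‖u‖⁻¹ : ℝ) : ℂ) • u, Submodule.smul_mem _ _ hu,
        ((‖v‖⁻¹ : ℝ) : ℂ) • v, Submodule.smul_mem _ _ hv, ?_, ?_, ?_⟩
      · rw [norm_smul]
        simp [abs_of_nonneg (le_of_lt hnu), inv_mul_cancel₀ hnu.ne']
      · rw [norm_smul]
        simp [abs_of_nonneg (le_of_lt hnv), inv_mul_cancel₀ hnv.ne']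
      · rw [inner_smul_left, inner_smul_right]
        simp [norm_mul, abs_of_nonneg (le_of_lt hnu), abs_of_nonneg (le_of_lt hnv), mul_assoc]
    have hle : ‖u‖⁻¹ * ‖v‖⁻¹ * ‖⟪u, v⟫‖ ≤ ε := by
      rw [hε]; exact le_csSup hbdd hmem
    calc ‖⟪u, v⟫‖ = (‖u‖ * ‖v‖) * (‖u‖⁻¹ * ‖v‖⁻¹ * ‖⟪u, v⟫‖) := by
          field_simp
      _ ≤ (‖u‖ * ‖v‖) * ε := by
          exact mul_le_mul_of_nonneg_left hle (by positivity)
      _ = ε * (‖u‖ * ‖v‖) := mul_comm _ _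
  set u : E := (Submodule.orthogonalProjection (LinearMap.ker A₁) ψ : E) with hudef
  set v : E := (Submodule.orthogonalProjection (LinearMap.ker A₂) ψ : E) with hvdef
  have humem : u ∈ LinearMap.ker A₁ := (Submodule.orthogonalProjection (LinearMap.ker A₁) ψ).2
  have hvmem : v ∈ LinearMap.ker A₂ := (Submodule.orthogonalProjection (LinearMap.ker A₂) ψ).2
  have hop1 : ⟪ψ - u, u⟫ = 0 :=
    Submodule.starProjection_inner_eq_zero (K := LinearMap.ker A₁) ψ u humem
  have hop2 : ⟪ψ - v, v⟫ = 0 :=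
    Submodule.starProjection_inner_eq_zero (K := LinearMap.ker A₂) ψ v hvmem
  -- Pythagoras
  have hp1 : ‖ψ‖ ^ 2 = ‖u‖ ^ 2 + ‖ψ - u‖ ^ 2 := by
    have h : ⟪u, ψ - u⟫ = 0 := by rw [← inner_conj_symm, hop1, map_zero]
    have := norm_add_sq (𝕜 := ℂ) u (ψ - u)
    rw [h] at this
    simpa using this
  have hp2 : ‖ψ‖ ^ 2 = ‖v‖ ^ 2 + ‖ψ - v‖ ^ 2 := by
    have h : ⟪v, ψ - v⟫ = 0 := by rw [← inner_conj_symm, hop2, map_zero]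
    have := norm_add_sq (𝕜 := ℂ) v (ψ - v)
    rw [h] at this
    simpa using this
  -- ⟪ψ, u⟫ real part equals ‖u‖²
  have hreu : (⟪ψ, u⟫).re = ‖u‖ ^ 2 := by
    have : ⟪ψ, u⟫ = ⟪ψ - u, u⟫ + ⟪u, u⟫ := by
      rw [← inner_add_left, sub_add_cancel]
    rw [this, hop1, zero_add]
    exact_mod_cast congrArg Complex.re (inner_self_eq_norm_sq_to_K (𝕜 := ℂ) u)
  have hrev : (⟪ψ, v⟫).re = ‖v‖ ^ 2 := by
    have : ⟪ψ, v⟫ = ⟪ψ - v, v⟫ + ⟪v, v⟫ := by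
      rw [← inner_add_left, sub_add_cancel]
    rw [this, hop2, zero_add]
    exact_mod_cast congrArg Complex.re (inner_self_eq_norm_sq_to_K (𝕜 := ℂ) v)
  -- s ≤ (1+ε)‖ψ‖²
  have hsle : ‖u‖ ^ 2 + ‖v‖ ^ 2 ≤ (1 + ε) * ‖ψ‖ ^ 2 := by
    have hCS : ‖u‖ ^ 2 + ‖v‖ ^ 2 ≤ ‖ψ‖ * ‖u + v‖ := by
      have h1 : (⟪ψ, u + v⟫).re = ‖u‖ ^ 2 + ‖v‖ ^ 2 := by
        rw [inner_add_right, Complex.add_re, hreu, hrev]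
      calc ‖u‖ ^ 2 + ‖v‖ ^ 2 = (⟪ψ, u + v⟫).re := h1.symm
        _ ≤ ‖⟪ψ, u + v⟫‖ := Complex.re_le_norm _
        _ ≤ ‖ψ‖ * ‖u + v‖ := norm_inner_le_norm _ _
    have hnorm : ‖u + v‖ ^ 2 ≤ (1 + ε) * (‖u‖ ^ 2 + ‖v‖ ^ 2) := by
      have h2 : ‖u + v‖ ^ 2 = ‖u‖ ^ 2 + 2 * (⟪u, v⟫).re + ‖v‖ ^ 2 := by
        simpa using norm_add_sq (𝕜 := ℂ) u v
      have h3 : (⟪u, v⟫).re ≤ ε * (‖u‖ * ‖v‖) :=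
        le_trans (Complex.re_le_norm _) (key u humem v hvmem)
      nlinarith [sq_nonneg (‖u‖ - ‖v‖), hε0]
    rcases eq_or_lt_of_le (by positivity : (0:ℝ) ≤ ‖u‖ ^ 2 + ‖v‖ ^ 2) with h | h
    · have : (0:ℝ) ≤ (1 + ε) * ‖ψ‖ ^ 2 := by positivity
      linarith
    · nlinarith [mul_le_mul hCS hCS (by positivity) (by positivity), sq_nonneg (‖u + v‖), norm_nonneg ψ]
  have hA : (⟪ψ, (A₁ + A₂) ψ⟫).re = (⟪ψ, A₁ ψ⟫).re + (⟪ψ, A₂ ψ⟫).re := by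
    rw [LinearMap.add_apply, inner_add_right, Complex.add_re]
  have hg1 := hgap₁ ψ
  have hg2 := hgap₂ ψ
  rw [← hudef] at hg1
  rw [← hvdef] at hg2
  nlinarith [hg1, hg2, hp1, hp2, hsle, hδ.le]
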